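/- Let M be a real symmetric n×n matrix. Then for any two indices i, j, the product of vertex M-energies satisfies ME(v_i) · ME(v_j) ≥ ([M − (tr(M)/n)I]_{ij})². -/

import Mathlib

open Matrix BigOperators

/-- The absolute value of a real matrix `B`, defined as `(B * Bᵀ)^(1/2)`. -/
noncomputable def matAbs {n : ℕ} (B : Matrix (Fin n) (Fin n) ℝ) : Matrix (Fin n) (Fin n) ℝ :=
  let hA : (B * Bᵀ).PosSemidef := Matrix.conjTranspose_eq_transpose_of_trivial B ▸
    Matrix.posSemidef_self_mul_conjTranspose B
  (hA.isHermitian.eigenvectorUnitary : Matrix (Fin n) (Fin n) ℝ) *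
    diagonal ((↑) ∘ (√·) ∘ hA.isHermitian.eigenvalues) *
    (star hA.isHermitian.eigenvectorUnitary : Matrix (Fin n) (Fin n) ℝ)

/-- The M-energy of the `i`-th vertex: `(|M - (tr M / n) • I|)_{ii}`. -/
noncomputable def mEnergy {n : ℕ} (M : Matrix (Fin n) (Fin n) ℝ) (i : Fin n) : ℝ :=
  matAbs (M - (M.trace / n) • 1) i i

lemma sandwich_apply {n : ℕ} (U : Matrix (Fin n) (Fin n) ℝ) (d : Fin n → ℝ) (i j : Fin n) :
    (U * Matrix.diagonal d * Uᵀ) i j = ∑ k, d k * (U i k * U j k) := by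
  rw [Matrix.mul_assoc]
  simp [Matrix.mul_apply, Matrix.diagonal_apply, ite_mul, Finset.mul_sum, Finset.sum_ite_eq]
  exact Finset.sum_congr rfl fun k _ => by ring

lemma sandwich_diag_nonneg {n : ℕ} (U : Matrix (Fin n) (Fin n) ℝ) (d : Fin n → ℝ)
    (hd : ∀ k, 0 ≤ d k) (i : Fin n) : 0 ≤ (U * Matrix.diagonal d * Uᵀ) i i := by
  rw [sandwich_apply]
  exact Finset.sum_nonneg fun k _ => mul_nonneg (hd k) (mul_self_nonneg _)

lemma sandwich_sq_le {n : ℕ} (U : Matrix (Fin n) (Fin n) ℝ) (d : Fin n → ℝ)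
    (hd : ∀ k, 0 ≤ d k) (i j : Fin n) :
    ((U * Matrix.diagonal d * Uᵀ) i j) ^ 2 ≤
      (U * Matrix.diagonal d * Uᵀ) i i * (U * Matrix.diagonal d * Uᵀ) j j := by
  rw [sandwich_apply, sandwich_apply, sandwich_apply]
  have h := Finset.sum_mul_sq_le_sq_mul_sq Finset.univ
    (fun k => Real.sqrt (d k) * U i k) (fun k => Real.sqrt (d k) * U j k)
  have e1 : ∀ (a b : Fin n), ∀ k, (Real.sqrt (d k) * U a k) * (Real.sqrt (d k) * U b k)
      = d k * (U a k * U b k) := by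
    intro a b k
    have : Real.sqrt (d k) * Real.sqrt (d k) = d k := Real.mul_self_sqrt (hd k)
    linear_combination U a k * U b k * this
  calc (∑ k, d k * (U i k * U j k)) ^ 2
      = (∑ k, (Real.sqrt (d k) * U i k) * (Real.sqrt (d k) * U j k)) ^ 2 := by
        congr 1; exact Finset.sum_congr rfl fun k _ => (e1 i j k).symm
    _ ≤ (∑ k, (Real.sqrt (d k) * U i k) ^ 2) * (∑ k, (Real.sqrt (d k) * U j k) ^ 2) := h
    _ = (∑ k, d k * (U i k * U i k)) * (∑ k, d k * (U j k * U j k)) := by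
        congr 1 <;> exact Finset.sum_congr rfl fun k _ => by rw [sq]; exact e1 _ _ k

theorem stmt3 {n : ℕ} (M : Matrix (Fin n) (Fin n) ℝ) (hM : M.IsSymm) (i j : Fin n) :
    mEnergy M i * mEnergy M j ≥ ((M - (M.trace / n) • 1) i j) ^ 2 := by
  unfold mEnergy
  set A : Matrix (Fin n) (Fin n) ℝ := M - (M.trace / n) • 1 with hAdef
  have hAsymm : Aᵀ = A := by
    rw [hAdef, Matrix.transpose_sub, Matrix.transpose_smul, Matrix.transpose_one, hM]
  have hAh : A.IsHermitian := by
    rw [Matrix.IsHermitian, Matrix.conjTranspose_eq_transpose_of_trivial]; exact hAsymm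
  set U : Matrix (Fin n) (Fin n) ℝ := (hAh.eigenvectorUnitary : Matrix (Fin n) (Fin n) ℝ) with hU
  set ev : Fin n → ℝ := hAh.eigenvalues with hev
  have hUU : Uᵀ * U = 1 := by
    have h := Unitary.coe_star_mul_self hAh.eigenvectorUnitary
    rwa [Matrix.star_eq_conjTranspose, Matrix.conjTranspose_eq_transpose_of_trivial] at h
  have hspec : A = U * Matrix.diagonal ev * Uᵀ := by
    have h := hAh.spectral_theorem
    rwa [Unitary.conjStarAlgAut_apply, Matrix.star_eq_conjTranspose,
      Matrix.conjTranspose_eq_transpose_of_trivial,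
      show (RCLike.ofReal ∘ hAh.eigenvalues : Fin n → ℝ) = ev from funext fun k => rfl] at h
  set B : Matrix (Fin n) (Fin n) ℝ := U * Matrix.diagonal (fun k => |ev k|) * Uᵀ with hBdef
  have key : ∀ D E : Matrix (Fin n) (Fin n) ℝ, (U*D*Uᵀ) * (U*E*Uᵀ) = U*(D*E)*Uᵀ := by
    intro D E
    calc (U*D*Uᵀ) * (U*E*Uᵀ) = U*D*(Uᵀ*U)*(E*Uᵀ) := by simp only [Matrix.mul_assoc]
      _ = U*(D*E)*Uᵀ := by rw [hUU, Matrix.mul_one]; simp only [Matrix.mul_assoc]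
  have hBpsd : B.PosSemidef := by
    have hd : Matrix.PosSemidef (Matrix.diagonal (fun k => |ev k|)) :=
      .diagonal (fun k => abs_nonneg _)
    have h := hd.mul_mul_conjTranspose_same U
    rwa [Matrix.conjTranspose_eq_transpose_of_trivial] at h
  have hB2 : B ^ 2 = A * Aᵀ := by
    rw [hAsymm, sq, hBdef, key, hspec, key, Matrix.diagonal_mul_diagonal,
      Matrix.diagonal_mul_diagonal]
    have hdd : (fun k => |ev k| * |ev k|) = fun k => ev k * ev k :=
      funext fun k => abs_mul_abs_self (ev k)
    rw [hdd]
  have hmabs : matAbs A = B := by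
    have hApsd : (A * Aᵀ).PosSemidef := Matrix.conjTranspose_eq_transpose_of_trivial A ▸
      Matrix.posSemidef_self_mul_conjTranspose A
    have e : matAbs A = cfc Real.sqrt (A * Aᵀ) := by
      rw [hApsd.isHermitian.cfc_eq, IsHermitian.cfc, Unitary.conjStarAlgAut_apply]; rfl
    open MatrixOrder in
    rw [e, ← cfcₙ_eq_cfc (hf0 := Real.sqrt_zero), ← CFC.sqrt_eq_real_sqrt _ hApsd.nonneg,
      CFC.sqrt_unique (b := B) (by rw [← sq]; exact hB2) hBpsd.nonneg]
  rw [hmabs]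
  -- entries
  set dP : Fin n → ℝ := fun k => |ev k| + ev k with hdP
  set dQ : Fin n → ℝ := fun k => |ev k| - ev k with hdQ
  have hdPn : ∀ k, 0 ≤ dP k := fun k => by have := neg_abs_le (ev k); simp only [hdP]; linarith
  have hdQn : ∀ k, 0 ≤ dQ k := fun k => by have := le_abs_self (ev k); simp only [hdQ]; linarith
  set P : Matrix (Fin n) (Fin n) ℝ := U * Matrix.diagonal dP * Uᵀ with hP
  set Q : Matrix (Fin n) (Fin n) ℝ := U * Matrix.diagonal dQ * Uᵀ with hQ
  have hPBA : P = B + A := by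
    rw [hP, hBdef, hspec, hdP, ← Matrix.add_mul, ← Matrix.mul_add, Matrix.diagonal_add]
  have hQBA : Q = B - A := by
    rw [hQ, hBdef, hspec, hdQ, ← Matrix.sub_mul, ← Matrix.mul_sub, Matrix.diagonal_sub]
  have hp := sandwich_sq_le U dP hdPn i j
  have hq := sandwich_sq_le U dQ hdQn i j
  have hPii := sandwich_diag_nonneg U dP hdPn i
  have hPjj := sandwich_diag_nonneg U dP hdPn j
  have hQii := sandwich_diag_nonneg U dQ hdQn i
  have hQjj := sandwich_diag_nonneg U dQ hdQn j
  have ePij : P i j = B i j + A i j := by rw [hPBA]; rfl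
  have eQij : Q i j = B i j - A i j := by rw [hQBA]; rfl
  have ePii : P i i = B i i + A i i := by rw [hPBA]; rfl
  have eQii : Q i i = B i i - A i i := by rw [hQBA]; rfl
  have ePjj : P j j = B j j + A j j := by rw [hPBA]; rfl
  have eQjj : Q j j = B j j - A j j := by rw [hQBA]; rfl
  rw [← hP] at hp hPii hPjj
  rw [← hQ] at hq hQii hQjj
  rw [ePij, ePii, ePjj] at hp
  rw [eQij, eQii, eQjj] at hq
  rw [ePii] at hPii
  rw [ePjj] at hPjj
  rw [eQii] at hQii
  rw [eQjj] at hQjj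
  set x := A i j
  set bij := B i j
  set bi := B i i
  set bj := B j j
  set aii := A i i
  set ajj := A j j
  -- key inequality
  have hy : 0 ≤ (bi+aii)*(bj-ajj) + (bi-aii)*(bj+ajj) :=
    add_nonneg (mul_nonneg hPii hQjj) (mul_nonneg hQii hPjj)
  have h2 : (2*(bij+x)*(bij-x))^2 ≤ ((bi+aii)*(bj-ajj) + (bi-aii)*(bj+ajj))^2 := by
    nlinarith [hp, hq, sq_nonneg (bij+x), sq_nonneg (bij-x),
      mul_nonneg hPii hPjj, mul_nonneg hQii hQjj,
      sq_nonneg ((bi+aii)*(bj-ajj) - (bi-aii)*(bj+ajj)),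
      mul_nonneg (mul_nonneg hPii hPjj) (sq_nonneg (bij-x))]
  have h3 : -(2*(bij+x)*(bij-x)) ≤ (bi+aii)*(bj-ajj) + (bi-aii)*(bj+ajj) := by
    have hs := Real.sqrt_le_sqrt h2
    rw [Real.sqrt_sq_eq_abs, Real.sqrt_sq_eq_abs, abs_of_nonneg hy] at hs
    exact le_trans (neg_le_abs _) hs
  nlinarith [hp, hq, h3]
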